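/- Let S and A be finite nonempty sets, let p and p̂ be two dynamics kernels on S×A, let π_D and π be two policies, let ρ0 be a common initial state distribution, let r be a reward function bounded in absolute value by r_max ≥ 0, and let γ ∈ (0,1) be a discount factor. Suppose (i) for every timestep t, the expectation over (s,a) drawn from the time-t state-action marginal of π_D under the true dynamics p of TV(p(·|s,a), p̂(·|s,a)) is at most ε_m, and (ii) max_s TV(π_D(·|s), π(·|s)) ≤ ε_π. Then the return of π under the true dynamics p and the return of π under the model p̂ satisfy η[π] ≥ η̂[π] − [ 2γ·r_max·(ε_m + 2ε_π)/(1−γ)² + 4·r_max·ε_π/(1−γ) ]. -/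

import Mathlib

open scoped BigOperators

/-- Total variation distance between two probability mass functions on a finite type. -/
noncomputable def tv {X : Type*} [Fintype X] (q1 q2 : PMF X) : ℝ :=
  (1 / 2) * ∑ x, |(q1 x).toReal - (q2 x).toReal|

/-- Total variation distance between two real-valued distributions on a finite type. -/
noncomputable def tvFun {X : Type*} [Fintype X] (d1 d2 : X → ℝ) : ℝ :=
  (1 / 2) * ∑ x, |d1 x - d2 x|

/-- Time-`t` state-action marginal of a (possibly time-varying) policy/dynamics pair,
started from initial state distribution `ρ0`:  `d⁰(s,a) = ρ0(s)·π₀(a|s)` and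
`d^{t+1}(s,a) = Σ_{s',a'} d^t(s',a')·p_t(s|s',a')·π_{t+1}(a|s)`. -/
noncomputable def marginal {S A : Type*} [Fintype S] [Fintype A]
    (ρ0 : PMF S) (πseq : ℕ → S → PMF A) (pseq : ℕ → S × A → PMF S) :
    ℕ → S × A → ℝ
  | 0 => fun sa => (ρ0 sa.1).toReal * ((πseq 0 sa.1) sa.2).toReal
  | t + 1 => fun sa =>
      ∑ s' : S, ∑ a' : A,
        marginal ρ0 πseq pseq t (s', a') * ((pseq t (s', a')) sa.1).toReal *
          ((πseq (t + 1) sa.1) sa.2).toReal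

/-- Discounted return `η = Σ_t γ^t Σ_{s,a} d^t(s,a)·r(s,a)`. -/
noncomputable def ret {S A : Type*} [Fintype S] [Fintype A]
    (γ : ℝ) (r : S × A → ℝ) (d : ℕ → S × A → ℝ) : ℝ :=
  ∑' t : ℕ, γ ^ t * ∑ sa : S × A, d t sa * r sa

/- ------------------- auxiliary lemmas ------------------- -/

section Aux

lemma pmf_sum {X : Type*} [Fintype X] (q : PMF X) : ∑ x, (q x).toReal = 1 := by
  have h := q.tsum_coe
  rw [tsum_fintype] at h
  rw [← ENNReal.toReal_sum (fun x _ => PMF.apply_ne_top q x), h, ENNReal.toReal_one]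

lemma two_tv {X : Type*} [Fintype X] (q1 q2 : PMF X) :
    ∑ x, |(q1 x).toReal - (q2 x).toReal| = 2 * tv q1 q2 := by rw [tv]; ring

lemma tv_self {X : Type*} [Fintype X] (q : PMF X) : tv q q = 0 := by simp [tv]

lemma tv_comm {X : Type*} [Fintype X] (q1 q2 : PMF X) : tv q1 q2 = tv q2 q1 := by
  unfold tv; congr 1; exact Finset.sum_congr rfl fun x _ => abs_sub_comm _ _

variable {S A : Type*} [Fintype S] [Fintype A]

lemma marginal_nonneg (ρ0 : PMF S) (πs : ℕ → S → PMF A) (ps : ℕ → S × A → PMF S) :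
    ∀ t sa, 0 ≤ marginal ρ0 πs ps t sa := by
  intro t
  induction t with
  | zero => exact fun sa => mul_nonneg ENNReal.toReal_nonneg ENNReal.toReal_nonneg
  | succ t ih =>
    intro sa
    refine Finset.sum_nonneg fun s' _ => Finset.sum_nonneg fun a' _ => ?_
    exact mul_nonneg (mul_nonneg (ih _) ENNReal.toReal_nonneg) ENNReal.toReal_nonneg

lemma marginal_sum (ρ0 : PMF S) (πs : ℕ → S → PMF A) (ps : ℕ → S × A → PMF S) :
    ∀ t, ∑ sa : S × A, marginal ρ0 πs ps t sa = 1 := by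
  intro t
  induction t with
  | zero =>
    rw [Fintype.sum_prod_type]
    simp only [marginal]
    calc ∑ s : S, ∑ a : A, (ρ0 s).toReal * ((πs 0 s) a).toReal
        = ∑ s : S, (ρ0 s).toReal * ∑ a : A, ((πs 0 s) a).toReal := by
          simp [Finset.mul_sum]
      _ = ∑ s : S, (ρ0 s).toReal := by simp [pmf_sum]
      _ = 1 := pmf_sum ρ0
  | succ t ih =>
    rw [Fintype.sum_prod_type]
    simp only [marginal]
    calc ∑ s : S, ∑ a : A, ∑ s' : S, ∑ a' : A,
          marginal ρ0 πs ps t (s', a') * ((ps t (s', a')) s).toReal * ((πs (t+1) s) a).toReal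
        = ∑ s : S, (∑ s' : S, ∑ a' : A,
            marginal ρ0 πs ps t (s', a') * ((ps t (s', a')) s).toReal) *
            ∑ a : A, ((πs (t+1) s) a).toReal := by
          congr 1; ext s
          rw [Finset.sum_mul]
          rw [Finset.sum_comm]
          congr 1; ext s'
          rw [Finset.sum_mul, Finset.sum_comm]
          congr 1; ext a'
          rw [Finset.mul_sum]
      _ = ∑ s : S, ∑ s' : S, ∑ a' : A,
            marginal ρ0 πs ps t (s', a') * ((ps t (s', a')) s).toReal := by
          simp [pmf_sum]
      _ = ∑ s' : S, ∑ a' : A, marginal ρ0 πs ps t (s', a') *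
            ∑ s : S, ((ps t (s', a')) s).toReal := by
          rw [Finset.sum_comm]
          congr 1; ext s'
          rw [Finset.sum_comm]
          congr 1; ext a'
          rw [Finset.mul_sum]
      _ = ∑ s' : S, ∑ a' : A, marginal ρ0 πs ps t (s', a') := by simp [pmf_sum]
      _ = 1 := by rw [← Fintype.sum_prod_type]; exact ih

/-- Aggregation of a signed measure through a kernel. -/
noncomputable def agg (d : S × A → ℝ) (k : S × A → S → ℝ) (s : S) : ℝ :=
  ∑ s' : S, ∑ a' : A, d (s', a') * k (s', a') s

lemma agg_abs_le (d : S × A → ℝ) (k : S × A → S → ℝ) (s : S) :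
    |agg d k s| ≤ agg (fun sa => |d sa|) (fun sa s => |k sa s|) s := by
  unfold agg
  calc |∑ s' : S, ∑ a' : A, d (s', a') * k (s', a') s|
      ≤ ∑ s' : S, |∑ a' : A, d (s', a') * k (s', a') s| := Finset.abs_sum_le_sum_abs _ _
    _ ≤ ∑ s' : S, ∑ a' : A, |d (s', a') * k (s', a') s| :=
        Finset.sum_le_sum fun s' _ => Finset.abs_sum_le_sum_abs _ _
    _ = ∑ s' : S, ∑ a' : A, |d (s', a')| * |k (s', a') s| := by simp [abs_mul]

lemma sum_agg (d : S × A → ℝ) (k : S × A → S → ℝ) :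
    ∑ s : S, agg d k s = ∑ sa : S × A, d sa * ∑ s : S, k sa s := by
  unfold agg
  rw [Fintype.sum_prod_type, Finset.sum_comm]
  congr 1; ext s'
  rw [Finset.sum_comm]
  congr 1; ext a'
  rw [Finset.mul_sum]

lemma agg_nonneg {d : S × A → ℝ} {k : S × A → S → ℝ} (hd : ∀ sa, 0 ≤ d sa)
    (hk : ∀ sa s, 0 ≤ k sa s) (s : S) : 0 ≤ agg d k s :=
  Finset.sum_nonneg fun s' _ => Finset.sum_nonneg fun a' _ =>
    mul_nonneg (hd _) (hk _ _)

/-- One-step TV growth bound. -/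
lemma step_bound (d1 d2 : S × A → ℝ) (hd1 : ∀ sa, 0 ≤ d1 sa) (hd2 : ∀ sa, 0 ≤ d2 sa)
    (hd2sum : ∑ sa : S × A, d2 sa = 1)
    (π1 π2 : S → PMF A) (p1 p2 : S × A → PMF S) (επ : ℝ)
    (hεπ : ∀ s, tv (π1 s) (π2 s) ≤ επ) :
    ∑ sa : S × A,
        |(∑ s' : S, ∑ a' : A, d1 (s', a') * ((p1 (s', a')) sa.1).toReal * ((π1 sa.1) sa.2).toReal)
          - ∑ s' : S, ∑ a' : A, d2 (s', a') * ((p2 (s', a')) sa.1).toReal * ((π2 sa.1) sa.2).toReal|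
      ≤ (∑ sa : S × A, |d1 sa - d2 sa|)
        + (∑ sa : S × A, d1 sa * (2 * tv (p1 sa) (p2 sa))) + 2 * επ := by
  set k1 : S × A → S → ℝ := fun sa s => ((p1 sa) s).toReal with hk1
  set k2 : S × A → S → ℝ := fun sa s => ((p2 sa) s).toReal with hk2
  set F : S → ℝ := fun s => agg (fun sa => d1 sa - d2 sa) k2 s with hF
  set H : S → ℝ := fun s => agg d1 (fun sa s => k1 sa s - k2 sa s) s with hH
  set G : S → ℝ := fun s => agg d2 k2 s with hG
  have hfac : ∀ (d : S × A → ℝ) (k : S × A → S → ℝ) (s : S) (c : ℝ),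
      (∑ s' : S, ∑ a' : A, d (s', a') * k (s', a') s * c) = agg d k s * c := by
    intro d k s c
    simp [agg, Finset.sum_mul]
  have hlin : ∀ s : S, agg d1 k1 s = F s + H s + G s := by
    intro s
    simp only [hF, hH, hG, agg, ← Finset.sum_add_distrib]
    refine Finset.sum_congr rfl fun s' _ => Finset.sum_congr rfl fun a' _ => ?_
    ring
  have hGnn : ∀ s, 0 ≤ G s :=
    agg_nonneg hd2 (fun sa s => ENNReal.toReal_nonneg)
  have hdecomp : ∀ s a,
      (∑ s' : S, ∑ a' : A, d1 (s', a') * ((p1 (s', a')) s).toReal * ((π1 s) a).toReal)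
        - (∑ s' : S, ∑ a' : A, d2 (s', a') * ((p2 (s', a')) s).toReal * ((π2 s) a).toReal)
      = (F s + H s) * ((π1 s) a).toReal
        + G s * (((π1 s) a).toReal - ((π2 s) a).toReal) := by
    intro s a
    rw [hfac d1 k1 s, hfac d2 k2 s, hlin s]
    show (F s + H s + G s) * _ - G s * _ = _
    ring
  calc ∑ sa : S × A, |_ - _|
      = ∑ s : S, ∑ a : A,
          |(F s + H s) * ((π1 s) a).toReal
            + G s * (((π1 s) a).toReal - ((π2 s) a).toReal)| := by
        rw [Fintype.sum_prod_type]
        exact Finset.sum_congr rfl fun s _ => Finset.sum_congr rfl fun a _ => by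
          rw [hdecomp s a]
    _ ≤ ∑ s : S, ∑ a : A,
          ((|F s| + |H s|) * ((π1 s) a).toReal
            + G s * |((π1 s) a).toReal - ((π2 s) a).toReal|) := by
        refine Finset.sum_le_sum fun s _ => Finset.sum_le_sum fun a _ => ?_
        calc |(F s + H s) * ((π1 s) a).toReal
              + G s * (((π1 s) a).toReal - ((π2 s) a).toReal)|
            ≤ |(F s + H s) * ((π1 s) a).toReal|
              + |G s * (((π1 s) a).toReal - ((π2 s) a).toReal)| := abs_add_le _ _
          _ ≤ (|F s| + |H s|) * ((π1 s) a).toReal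
              + G s * |((π1 s) a).toReal - ((π2 s) a).toReal| := by
              rw [abs_mul, abs_mul, abs_of_nonneg ENNReal.toReal_nonneg,
                abs_of_nonneg (hGnn s)]
              exact add_le_add (mul_le_mul_of_nonneg_right (abs_add_le _ _)
                ENNReal.toReal_nonneg) le_rfl
    _ = ∑ s : S, ((|F s| + |H s|) + G s * (2 * tv (π1 s) (π2 s))) := by
        refine Finset.sum_congr rfl fun s _ => ?_
        rw [Finset.sum_add_distrib, ← Finset.mul_sum, ← Finset.mul_sum, pmf_sum,
          two_tv, mul_one]
    _ ≤ ∑ s : S, ((|F s| + |H s|) + G s * (2 * επ)) := by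
        refine Finset.sum_le_sum fun s _ => ?_
        have := mul_le_mul_of_nonneg_left
          (mul_le_mul_of_nonneg_left (hεπ s) (by norm_num : (0:ℝ) ≤ 2)) (hGnn s)
        linarith
    _ = (∑ s : S, |F s|) + (∑ s : S, |H s|) + (∑ s : S, G s) * (2 * επ) := by
        rw [Finset.sum_add_distrib, Finset.sum_add_distrib, Finset.sum_mul]
    _ ≤ (∑ sa : S × A, |d1 sa - d2 sa|)
        + (∑ sa : S × A, d1 sa * (2 * tv (p1 sa) (p2 sa))) + 2 * επ := by
        have hFs : (∑ s : S, |F s|) ≤ ∑ sa : S × A, |d1 sa - d2 sa| := by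
          calc ∑ s : S, |F s|
              ≤ ∑ s : S, agg (fun sa => |d1 sa - d2 sa|) (fun sa s => |k2 sa s|) s :=
                Finset.sum_le_sum fun s _ => agg_abs_le _ _ s
            _ = ∑ sa : S × A, |d1 sa - d2 sa| * ∑ s : S, |k2 sa s| := sum_agg _ _
            _ = ∑ sa : S × A, |d1 sa - d2 sa| := by
                refine Finset.sum_congr rfl fun sa _ => ?_
                have : ∑ s : S, |k2 sa s| = 1 := by
                  simp only [hk2, abs_of_nonneg ENNReal.toReal_nonneg]
                  exact pmf_sum _
                rw [this, mul_one]
        have hHs : (∑ s : S, |H s|) ≤ ∑ sa : S × A, d1 sa * (2 * tv (p1 sa) (p2 sa)) := by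
          calc ∑ s : S, |H s|
              ≤ ∑ s : S, agg (fun sa => |d1 sa|) (fun sa s => |k1 sa s - k2 sa s|) s :=
                Finset.sum_le_sum fun s _ => agg_abs_le _ _ s
            _ = ∑ sa : S × A, |d1 sa| * ∑ s : S, |k1 sa s - k2 sa s| := sum_agg _ _
            _ = ∑ sa : S × A, d1 sa * (2 * tv (p1 sa) (p2 sa)) := by
                refine Finset.sum_congr rfl fun sa _ => ?_
                rw [abs_of_nonneg (hd1 sa)]
                congr 1
                simpa only [hk1, hk2] using two_tv (p1 sa) (p2 sa)
        have hGs : (∑ s : S, G s) = 1 := by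
          rw [hG]
          calc ∑ s : S, agg d2 k2 s
              = ∑ sa : S × A, d2 sa * ∑ s : S, k2 sa s := sum_agg _ _
            _ = ∑ sa : S × A, d2 sa := by
                refine Finset.sum_congr rfl fun sa _ => ?_
                rw [show ∑ s : S, k2 sa s = 1 from pmf_sum _, mul_one]
            _ = 1 := hd2sum
        rw [hGs, one_mul]
        exact add_le_add (add_le_add hFs hHs) le_rfl

lemma base_bound (ρ0 : PMF S) (π1 π2 : S → PMF A) (p1 p2 : S × A → PMF S) (επ : ℝ)
    (hεπ : ∀ s, tv (π1 s) (π2 s) ≤ επ) :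
    ∑ sa : S × A, |marginal ρ0 (fun _ => π1) (fun _ => p1) 0 sa -
        marginal ρ0 (fun _ => π2) (fun _ => p2) 0 sa| ≤ 2 * επ := by
  simp only [marginal]
  rw [Fintype.sum_prod_type]
  calc ∑ s : S, ∑ a : A, |(ρ0 s).toReal * ((π1 s) a).toReal - (ρ0 s).toReal * ((π2 s) a).toReal|
      = ∑ s : S, (ρ0 s).toReal * (2 * tv (π1 s) (π2 s)) := by
        refine Finset.sum_congr rfl fun s _ => ?_
        rw [← two_tv, Finset.mul_sum]
        refine Finset.sum_congr rfl fun a _ => ?_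
        rw [← mul_sub, abs_mul, abs_of_nonneg ENNReal.toReal_nonneg]
    _ ≤ ∑ s : S, (ρ0 s).toReal * (2 * επ) := by
        refine Finset.sum_le_sum fun s _ => ?_
        exact mul_le_mul_of_nonneg_left (by linarith [hεπ s]) ENNReal.toReal_nonneg
    _ = 2 * επ := by rw [← Finset.sum_mul, pmf_sum, one_mul]

lemma marginal_tv_bound (ρ0 : PMF S) (π1 π2 : S → PMF A) (p1 p2 : S × A → PMF S)
    (επ εm : ℝ) (hεπ : ∀ s, tv (π1 s) (π2 s) ≤ επ)
    (hεm : ∀ t, ∑ sa : S × A,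
      marginal ρ0 (fun _ => π1) (fun _ => p1) t sa * tv (p1 sa) (p2 sa) ≤ εm) :
    ∀ t, ∑ sa : S × A, |marginal ρ0 (fun _ => π1) (fun _ => p1) t sa -
        marginal ρ0 (fun _ => π2) (fun _ => p2) t sa|
      ≤ 2 * (t + 1 : ℝ) * επ + 2 * (t : ℝ) * εm := by
  intro t
  induction t with
  | zero =>
    simpa using base_bound ρ0 π1 π2 p1 p2 επ hεπ
  | succ t ih =>
    have hstep := step_bound (marginal ρ0 (fun _ => π1) (fun _ => p1) t)
      (marginal ρ0 (fun _ => π2) (fun _ => p2) t)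
      (marginal_nonneg _ _ _ t) (marginal_nonneg _ _ _ t)
      (marginal_sum _ _ _ t) π1 π2 p1 p2 επ hεπ
    have heq : ∑ sa : S × A, |marginal ρ0 (fun _ => π1) (fun _ => p1) (t+1) sa -
        marginal ρ0 (fun _ => π2) (fun _ => p2) (t+1) sa|
        = ∑ sa : S × A,
          |(∑ s' : S, ∑ a' : A, marginal ρ0 (fun _ => π1) (fun _ => p1) t (s', a') *
              ((p1 (s', a')) sa.1).toReal * ((π1 sa.1) sa.2).toReal)
            - ∑ s' : S, ∑ a' : A, marginal ρ0 (fun _ => π2) (fun _ => p2) t (s', a') *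
              ((p2 (s', a')) sa.1).toReal * ((π2 sa.1) sa.2).toReal| := by
      simp only [marginal]
    have hm : ∑ sa : S × A, marginal ρ0 (fun _ => π1) (fun _ => p1) t sa *
        (2 * tv (p1 sa) (p2 sa)) ≤ 2 * εm := by
      have : ∑ sa : S × A, marginal ρ0 (fun _ => π1) (fun _ => p1) t sa *
          (2 * tv (p1 sa) (p2 sa))
          = 2 * ∑ sa : S × A, marginal ρ0 (fun _ => π1) (fun _ => p1) t sa *
              tv (p1 sa) (p2 sa) := by
        rw [Finset.mul_sum]
        exact Finset.sum_congr rfl fun sa _ => by ring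
      rw [this]
      linarith [hεm t]
    rw [heq]
    push_cast
    linarith

end Aux

/-- MBPO performance bound (Theorem A.1 / Theorem 4.1). -/
theorem mbpo_performance_bound
    {S A : Type*} [Fintype S] [Fintype A] [Nonempty S] [Nonempty A]
    (p phat : S × A → PMF S) (πD π : S → PMF A) (ρ0 : PMF S)
    (r : S × A → ℝ) (rmax : ℝ) (hrmax : 0 ≤ rmax) (hr : ∀ sa : S × A, |r sa| ≤ rmax)
    (γ : ℝ) (hγ0 : 0 < γ) (hγ1 : γ < 1) (εm επ : ℝ)
    (hεm : ∀ t : ℕ, ∑ sa : S × A,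
      marginal ρ0 (fun _ => πD) (fun _ => p) t sa * tv (p sa) (phat sa) ≤ εm)
    (hεπ : ∀ s : S, tv (πD s) (π s) ≤ επ) :
    ret γ r (marginal ρ0 (fun _ => π) (fun _ => p)) ≥
      ret γ r (marginal ρ0 (fun _ => π) (fun _ => phat)) -
        (2 * γ * rmax * (εm + 2 * επ) / (1 - γ) ^ 2 + 4 * rmax * επ / (1 - γ)) := by
  set d1 := marginal ρ0 (fun _ => π) (fun _ => p) with hd1
  set d2 := marginal ρ0 (fun _ => π) (fun _ => phat) with hd2
  set dD := marginal ρ0 (fun _ => πD) (fun _ => p) with hdD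
  set dDh := marginal ρ0 (fun _ => πD) (fun _ => phat) with hdDh
  have hεπ' : ∀ s : S, tv (π s) (πD s) ≤ επ := fun s => (tv_comm (π s) (πD s)) ▸ hεπ s
  -- pair 1 : (π,p) vs (πD,p)
  have hP1 : ∀ t, ∑ sa : S × A, |d1 t sa - dD t sa| ≤ 2 * (t + 1 : ℝ) * επ := by
    intro t
    have h0 : ∀ t', ∑ sa : S × A, d1 t' sa * tv (p sa) (p sa) ≤ (0:ℝ) := by
      intro t'; simp [tv_self]
    have := marginal_tv_bound ρ0 π πD p p επ 0 hεπ' h0 t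
    simpa using this
  -- pair 2 : (πD,p) vs (πD,phat)
  have hP2 : ∀ t, ∑ sa : S × A, |dD t sa - dDh t sa| ≤ 2 * (t : ℝ) * εm := by
    intro t
    have h0 : ∀ s : S, tv (πD s) (πD s) ≤ (0:ℝ) := fun s => le_of_eq (tv_self _)
    have := marginal_tv_bound ρ0 πD πD p phat 0 εm h0 hεm t
    simpa using this
  -- pair 3 : (πD,phat) vs (π,phat)
  have hP3 : ∀ t, ∑ sa : S × A, |dDh t sa - d2 t sa| ≤ 2 * (t + 1 : ℝ) * επ := by
    intro t
    have h0 : ∀ t', ∑ sa : S × A, dDh t' sa * tv (phat sa) (phat sa) ≤ (0:ℝ) := by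
      intro t'; simp [tv_self]
    have := marginal_tv_bound ρ0 πD π phat phat επ 0 hεπ h0 t
    simpa using this
  have hD : ∀ t, ∑ sa : S × A, |d2 t sa - d1 t sa| ≤
      4 * (t + 1 : ℝ) * επ + 2 * (t : ℝ) * εm := by
    intro t
    have htri : ∑ sa : S × A, |d2 t sa - d1 t sa| ≤
        (∑ sa : S × A, |d1 t sa - dD t sa|) + (∑ sa : S × A, |dD t sa - dDh t sa|)
          + ∑ sa : S × A, |dDh t sa - d2 t sa| := by
      rw [← Finset.sum_add_distrib, ← Finset.sum_add_distrib]
      refine Finset.sum_le_sum fun sa _ => ?_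
      calc |d2 t sa - d1 t sa| = |(d1 t sa - dD t sa) + (dD t sa - dDh t sa)
            + (dDh t sa - d2 t sa)| := by rw [abs_sub_comm]; ring_nf
        _ ≤ _ := by
            calc |(d1 t sa - dD t sa) + (dD t sa - dDh t sa) + (dDh t sa - d2 t sa)|
                ≤ |(d1 t sa - dD t sa) + (dD t sa - dDh t sa)| + |dDh t sa - d2 t sa| :=
                  abs_add_le _ _
              _ ≤ |d1 t sa - dD t sa| + |dD t sa - dDh t sa| + |dDh t sa - d2 t sa| :=
                  add_le_add_left (abs_add_le _ _) _
    linarith [hP1 t, hP2 t, hP3 t]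
  -- return bounds
  have hrdsum : ∀ (d : ℕ → S × A → ℝ) (hdn : ∀ t sa, 0 ≤ d t sa)
      (hds : ∀ t, ∑ sa : S × A, d t sa = 1) (t : ℕ),
      |∑ sa : S × A, d t sa * r sa| ≤ rmax := by
    intro d hdn hds t
    calc |∑ sa : S × A, d t sa * r sa| ≤ ∑ sa : S × A, |d t sa * r sa| :=
        Finset.abs_sum_le_sum_abs _ _
      _ ≤ ∑ sa : S × A, d t sa * rmax := by
          refine Finset.sum_le_sum fun sa _ => ?_
          rw [abs_mul, abs_of_nonneg (hdn t sa)]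
          exact mul_le_mul_of_nonneg_left (hr sa) (hdn t sa)
      _ = rmax := by rw [← Finset.sum_mul, hds t, one_mul]
  have hγnn : (0:ℝ) ≤ γ := le_of_lt hγ0
  have hsum_geom : Summable (fun t : ℕ => γ ^ t) := summable_geometric_of_lt_one hγnn hγ1
  have hsum_tgeom : Summable (fun t : ℕ => (t : ℝ) * γ ^ t) := by
    have : ‖γ‖ < 1 := by rwa [Real.norm_eq_abs, abs_of_nonneg hγnn]
    simpa using summable_pow_mul_geometric_of_norm_lt_one 1 this
  have hsc : ∀ (d : ℕ → S × A → ℝ) (hdn : ∀ t sa, 0 ≤ d t sa)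
      (hds : ∀ t, ∑ sa : S × A, d t sa = 1),
      Summable (fun t : ℕ => γ ^ t * ∑ sa : S × A, d t sa * r sa) := by
    intro d hdn hds
    refine Summable.of_norm_bounded (hsum_geom.mul_left rmax) ?_
    intro t
    rw [Real.norm_eq_abs, abs_mul, abs_of_nonneg (pow_nonneg hγnn t)]
    calc γ ^ t * |∑ sa : S × A, d t sa * r sa| ≤ γ ^ t * rmax :=
        mul_le_mul_of_nonneg_left (hrdsum d hdn hds t) (pow_nonneg hγnn t)
      _ = rmax * γ ^ t := mul_comm _ _
  have hs1 : Summable (fun t : ℕ => γ ^ t * ∑ sa : S × A, d1 t sa * r sa) :=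
    hsc d1 (marginal_nonneg _ _ _) (marginal_sum _ _ _)
  have hs2 : Summable (fun t : ℕ => γ ^ t * ∑ sa : S × A, d2 t sa * r sa) :=
    hsc d2 (marginal_nonneg _ _ _) (marginal_sum _ _ _)
  set a : ℝ := 4 * rmax * επ with ha
  set b : ℝ := 4 * rmax * επ + 2 * rmax * εm with hb
  have hgsum : Summable (fun t : ℕ => a * γ ^ t + b * ((t : ℝ) * γ ^ t)) :=
    (hsum_geom.mul_left a).add (hsum_tgeom.mul_left b)
  have hpt : ∀ t : ℕ, γ ^ t * (∑ sa : S × A, d2 t sa * r sa)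
      - γ ^ t * (∑ sa : S × A, d1 t sa * r sa)
      ≤ a * γ ^ t + b * ((t : ℝ) * γ ^ t) := by
    intro t
    have h1 : (∑ sa : S × A, d2 t sa * r sa) - (∑ sa : S × A, d1 t sa * r sa)
        ≤ rmax * (4 * (t + 1 : ℝ) * επ + 2 * (t : ℝ) * εm) := by
      calc (∑ sa : S × A, d2 t sa * r sa) - (∑ sa : S × A, d1 t sa * r sa)
          = ∑ sa : S × A, (d2 t sa - d1 t sa) * r sa := by
            rw [← Finset.sum_sub_distrib]
            exact Finset.sum_congr rfl fun sa _ => (sub_mul _ _ _).symm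
        _ ≤ ∑ sa : S × A, |d2 t sa - d1 t sa| * rmax := by
            refine Finset.sum_le_sum fun sa _ => ?_
            calc (d2 t sa - d1 t sa) * r sa ≤ |(d2 t sa - d1 t sa) * r sa| := le_abs_self _
              _ = |d2 t sa - d1 t sa| * |r sa| := abs_mul _ _
              _ ≤ |d2 t sa - d1 t sa| * rmax :=
                  mul_le_mul_of_nonneg_left (hr sa) (abs_nonneg _)
        _ = (∑ sa : S × A, |d2 t sa - d1 t sa|) * rmax := by rw [Finset.sum_mul]
        _ ≤ (4 * (t + 1 : ℝ) * επ + 2 * (t : ℝ) * εm) * rmax :=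
            mul_le_mul_of_nonneg_right (hD t) hrmax
        _ = rmax * (4 * (t + 1 : ℝ) * επ + 2 * (t : ℝ) * εm) := mul_comm _ _
    have h2 := mul_le_mul_of_nonneg_left h1 (pow_nonneg hγnn t)
    calc γ ^ t * (∑ sa : S × A, d2 t sa * r sa) - γ ^ t * (∑ sa : S × A, d1 t sa * r sa)
        = γ ^ t * ((∑ sa : S × A, d2 t sa * r sa) - (∑ sa : S × A, d1 t sa * r sa)) := by ring
      _ ≤ γ ^ t * (rmax * (4 * (t + 1 : ℝ) * επ + 2 * (t : ℝ) * εm)) := h2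
      _ = a * γ ^ t + b * ((t : ℝ) * γ ^ t) := by rw [ha, hb]; ring
  have hdiff : ret γ r d2 - ret γ r d1 ≤ ∑' t : ℕ, (a * γ ^ t + b * ((t : ℝ) * γ ^ t)) := by
    rw [ret, ret, ← Summable.tsum_sub hs2 hs1]
    exact Summable.tsum_le_tsum hpt (hs2.sub hs1) hgsum
  have htv : ∑' t : ℕ, (a * γ ^ t + b * ((t : ℝ) * γ ^ t))
      = a * (1 - γ)⁻¹ + b * (γ / (1 - γ) ^ 2) := by
    rw [Summable.tsum_add (hsum_geom.mul_left a) (hsum_tgeom.mul_left b),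
      tsum_mul_left, tsum_mul_left, tsum_geometric_of_lt_one hγnn hγ1]
    congr 1
    congr 1
    have : ‖γ‖ < 1 := by rwa [Real.norm_eq_abs, abs_of_nonneg hγnn]
    exact tsum_coe_mul_geometric_of_norm_lt_one this
  have hfinal : a * (1 - γ)⁻¹ + b * (γ / (1 - γ) ^ 2)
      = 2 * γ * rmax * (εm + 2 * επ) / (1 - γ) ^ 2 + 4 * rmax * επ / (1 - γ) := by
    have h1γ : (1 : ℝ) - γ ≠ 0 := by linarith
    rw [ha, hb]; field_simp; ring
  linarith [hdiff, htv ▸ hdiff]
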